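/- Consider a non-interactive bit-commitment scheme with projective verification operators {V_y}. If the scheme is ε-binding against non-adaptive adversaries (i.e., for every density operator σ_B and every pair of openings y₀ for bit 0 and y₁ for bit 1: Tr(V_{y₀}σ_B) + Tr(V_{y₁}σ_B) ≤ 1 + ε), then it is (2^{q/2}√ε)-binding against adversaries holding a quantum register A of at most q qubits and using projective opening measurements: for every ρ_AB with dim H_A ≤ 2^q, P₀^A(ρ) + P₁^A(ρ) ≤ 1 + 2^{q/2}√ε, where P_b^A(ρ) = max over projective measurements {F_{y_b}} on A of Σ_{y_b} Tr((F_{y_b} ⊗ V_{y_b}) ρ_AB). -/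

import Mathlib

open scoped Kronecker ComplexOrder
open Matrix

noncomputable section

open scoped InnerProductSpace
set_option linter.unusedSectionVars false
set_option maxHeartbeats 1000000


namespace Stmt8Aux

variable {ι κ : Type*} [Fintype ι] [Fintype κ]

/-- view a plain function as a Euclidean space vector -/
def toE (x : ι → ℂ) : EuclideanSpace ℂ ι := WithLp.toLp 2 x

@[simp] lemma toE_apply (x : ι → ℂ) (i : ι) : toE x i = x i := rfl

lemma toE_add (x y : ι → ℂ) : toE (x + y) = toE x + toE y := rfl

lemma toE_sum {α : Type*} (s : Finset α) (f : α → ι → ℂ) :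
    toE (∑ a ∈ s, f a) = ∑ a ∈ s, toE (f a) := by
  simp only [toE, WithLp.toLp_sum]

lemma inner_toE (x y : ι → ℂ) : ⟪toE x, toE y⟫_ℂ = star x ⬝ᵥ y := by
  simp [toE, PiLp.inner_apply, dotProduct, RCLike.inner_apply, mul_comm]

lemma normsq_toE (x : ι → ℂ) : (‖toE x‖ : ℝ)^2 = (star x ⬝ᵥ x).re := by
  rw [← inner_toE]
  rw [← @inner_self_eq_norm_sq ℂ]
  rfl

lemma inner_mulVec_left (A : Matrix ι ι ℂ) (x y : ι → ℂ) :
    ⟪toE (A *ᵥ x), toE y⟫_ℂ = ⟪toE x, toE (Aᴴ *ᵥ y)⟫_ℂ := by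
  rw [inner_toE, inner_toE, star_mulVec, ← dotProduct_mulVec]

end Stmt8Aux

namespace Stmt8Aux

variable {ι κ : Type*} [Fintype ι] [Fintype κ]

lemma retrace (B : Matrix ι κ ℂ) :
    ((Bᴴ * B).trace).re = ∑ j, ∑ k, Complex.normSq (B k j) := by
  simp [Matrix.trace, Matrix.mul_apply, Matrix.diag, conjTranspose_apply,
    Complex.re_sum, Complex.mul_re, Complex.normSq_apply]

lemma retrace_nonneg (B : Matrix ι κ ℂ) : 0 ≤ ((Bᴴ * B).trace).re := by
  rw [retrace]
  exact Finset.sum_nonneg fun j _ => Finset.sum_nonneg fun k _ => Complex.normSq_nonneg _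

lemma eq_zero_of_retrace_eq_zero {B : Matrix ι κ ℂ} (h : ((Bᴴ * B).trace).re = 0) :
    B = 0 := by
  rw [retrace] at h
  ext k j
  have h2 : ∀ j' ∈ (Finset.univ : Finset κ), (0:ℝ) ≤ ∑ k, Complex.normSq (B k j') :=
    fun j' _ => Finset.sum_nonneg fun k _ => Complex.normSq_nonneg _
  have h3 := (Finset.sum_eq_zero_iff_of_nonneg h2).mp h j (Finset.mem_univ j)
  have h4 := (Finset.sum_eq_zero_iff_of_nonneg
    (fun k' (_ : k' ∈ Finset.univ) => Complex.normSq_nonneg (B k' j))).mp h3 k (Finset.mem_univ k)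
  simpa using Complex.normSq_eq_zero.mp h4

/-- projectors summing to one are mutually orthogonal -/
lemma proj_orth [DecidableEq ι] {α : Type*} [Fintype α] [DecidableEq α] {F : α → Matrix ι ι ℂ}
    (hh : ∀ a, (F a).IsHermitian) (hp : ∀ a, F a * F a = F a) (hs : ∑ a, F a = 1)
    {a b : α} (hab : a ≠ b) : F a * F b = 0 := by
  have key : ∑ c ∈ Finset.univ.erase a, (F a * F c * F a) = 0 := by
    have h1 : F a * (∑ c, F c) * F a = F a := by rw [hs, mul_one, hp a]
    have h2 : F a * (∑ c, F c) * F a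
        = F a + ∑ c ∈ Finset.univ.erase a, (F a * F c * F a) := by
      rw [Finset.mul_sum, Finset.sum_mul,
        ← Finset.add_sum_erase _ (fun c => F a * F c * F a) (Finset.mem_univ a),
        hp a, hp a]
    rw [h2] at h1
    exact add_left_cancel (h1.trans (add_zero (F a)).symm)
  have hterm : ∀ c ∈ Finset.univ.erase a, F a * F c * F a = (F c * F a)ᴴ * (F c * F a) := by
    intro c _
    rw [conjTranspose_mul, (hh a).eq, (hh c).eq]
    simp only [← mul_assoc]
    rw [mul_assoc (F a) (F c) (F c), hp c]
  have key2 : ∑ c ∈ Finset.univ.erase a, ((F c * F a)ᴴ * (F c * F a)) = 0 :=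
    (Finset.sum_congr rfl hterm).symm.trans key
  have hsum : ∑ c ∈ Finset.univ.erase a, (((F c * F a)ᴴ * (F c * F a)).trace).re = 0 := by
    have := congrArg (fun M : Matrix ι ι ℂ => (M.trace).re) key2
    simpa [Matrix.trace_sum, Complex.re_sum] using this
  have htr := (Finset.sum_eq_zero_iff_of_nonneg
      (fun c _ => retrace_nonneg (F c * F a))).mp hsum b
      (Finset.mem_erase.mpr ⟨Ne.symm hab, Finset.mem_univ b⟩)
  have hz := eq_zero_of_retrace_eq_zero htr
  calc F a * F b = (F b * F a)ᴴ := by rw [conjTranspose_mul, (hh a).eq, (hh b).eq]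
  _ = 0 := by rw [hz, conjTranspose_zero]

end Stmt8Aux

namespace Stmt8Aux

variable {ι κ : Type*} [Fintype ι] [Fintype κ]

lemma norm_toE_mulVec_idem {A : Matrix ι ι ℂ} (hh : A.IsHermitian) (hp : A * A = A)
    (x : ι → ℂ) : (⟪toE x, toE (A *ᵥ x)⟫_ℂ) = (‖toE (A *ᵥ x)‖ : ℂ)^2 := by
  have h1 : A *ᵥ x = A *ᵥ (A *ᵥ x) := by rw [mulVec_mulVec, hp]
  calc ⟪toE x, toE (A *ᵥ x)⟫_ℂ = ⟪toE x, toE (A *ᵥ (A *ᵥ x))⟫_ℂ := by rw [← h1]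
  _ = ⟪toE (Aᴴ *ᵥ x), toE (A *ᵥ x)⟫_ℂ := by
        rw [inner_mulVec_left, conjTranspose_conjTranspose]
  _ = ⟪toE (A *ᵥ x), toE (A *ᵥ x)⟫_ℂ := by rw [hh.eq]
  _ = (‖toE (A *ᵥ x)‖ : ℂ)^2 := by
        rw [inner_self_eq_norm_sq_to_K]; norm_cast

/-- Pythagoras for a pairwise-orthogonal finite family. -/
lemma normsq_sum_of_orth {α : Type*} [Fintype α] (f : α → ι → ℂ)
    (horth : ∀ a b, a ≠ b → ⟪toE (f a), toE (f b)⟫_ℂ = 0) :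
    (‖toE (∑ a, f a)‖:ℝ)^2 = ∑ a, (‖toE (f a)‖:ℝ)^2 := by
  classical
  have key : ⟪toE (∑ a, f a), toE (∑ a, f a)⟫_ℂ = ∑ a, ⟪toE (f a), toE (f a)⟫_ℂ := by
    rw [toE_sum, sum_inner]
    refine Finset.sum_congr rfl (fun a _ => ?_)
    rw [inner_sum]
    refine Finset.sum_eq_single_of_mem a (Finset.mem_univ a) (fun b _ hb => ?_)
    exact horth a b (Ne.symm hb)
  have h1 := @inner_self_eq_norm_sq ℂ _ _ _ _ (toE (∑ a, f a))
  rw [← h1, key, map_sum]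
  exact Finset.sum_congr rfl (fun a _ => @inner_self_eq_norm_sq ℂ _ _ _ _ (toE (f a)))

end Stmt8Aux

namespace Stmt8Aux

variable {ι : Type*} [Fintype ι] [DecidableEq ι]

lemma psd_trace_re_nonneg {M : Matrix ι ι ℂ} (hM : M.PosSemidef) : 0 ≤ (M.trace).re := by
  rw [Matrix.trace, Complex.re_sum]
  refine Finset.sum_nonneg fun i _ => ?_
  have := hM.re_dotProduct_nonneg (Pi.single i 1)
  simpa [dotProduct, Matrix.mulVec, Pi.single_apply] using this

lemma psd_of_proj {F : Matrix ι ι ℂ} (hh : F.IsHermitian) (hp : F * F = F) :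
    F.PosSemidef := by
  have : F = Fᴴ * F := by rw [hh.eq, hp]
  rw [this]
  exact Matrix.posSemidef_conjTranspose_mul_self F

lemma mul_vecMulVec (F : Matrix ι ι ℂ) (u v : ι → ℂ) :
    F * Matrix.vecMulVec u v = Matrix.vecMulVec (F *ᵥ u) v := by
  ext i j
  simp [Matrix.mul_apply, Matrix.vecMulVec_apply, Matrix.mulVec, dotProduct,
    Finset.sum_mul, mul_assoc]

lemma vecMulVec_mul (F : Matrix ι ι ℂ) (u v : ι → ℂ) :
    Matrix.vecMulVec u v * F = Matrix.vecMulVec u (v ᵥ* F) := by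
  ext i j
  simp [Matrix.mul_apply, Matrix.vecMulVec_apply, Matrix.vecMul, dotProduct,
    Finset.mul_sum, mul_assoc]

lemma trace_re_ge_one_of_proj_ne_zero {F : Matrix ι ι ℂ}
    (hh : F.IsHermitian) (hp : F * F = F) (hF : F ≠ 0) : 1 ≤ (F.trace).re := by
  -- find a fixed vector
  obtain ⟨i0, j0, hij⟩ : ∃ i j, F i j ≠ 0 := by
    by_contra h
    push_neg at h
    exact hF (Matrix.ext fun i j => h i j)
  set φ : ι → ℂ := fun i => F i j0 with hφ
  have hfix : F *ᵥ φ = φ := by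
    ext i
    simp only [Matrix.mulVec, dotProduct, hφ]
    have := congrFun (congrFun hp i) j0
    simpa [Matrix.mul_apply] using this
  set r : ℂ := star φ ⬝ᵥ φ with hr
  have hr_re : r = (∑ i, Complex.normSq (φ i) : ℝ) := by
    rw [hr]
    push_cast
    simp [dotProduct, Complex.normSq_eq_conj_mul_self]
  have hrpos : 0 < (∑ i, Complex.normSq (φ i) : ℝ) := by
    have : Complex.normSq (φ i0) ≠ 0 := fun h => hij (Complex.normSq_eq_zero.mp h)
    have h1 : 0 < Complex.normSq (φ i0) := lt_of_le_of_ne (Complex.normSq_nonneg _) (Ne.symm this)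
    exact lt_of_lt_of_le h1 (Finset.single_le_sum (fun i _ => Complex.normSq_nonneg (φ i))
      (Finset.mem_univ i0))
  have hrne : r ≠ 0 := by rw [hr_re]; exact_mod_cast ne_of_gt hrpos
  set P : Matrix ι ι ℂ := r⁻¹ • Matrix.vecMulVec φ (star φ) with hP
  have hstarφ : star φ ᵥ* F = star φ := by
    have : star φ ᵥ* F = star (Fᴴ *ᵥ φ) := by
      rw [Matrix.star_mulVec, conjTranspose_conjTranspose]
    rw [this, hh.eq, hfix]
  have hFP : F * P = P := by
    rw [hP, Matrix.mul_smul, mul_vecMulVec, hfix]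
  have hPF : P * F = P := by
    rw [hP, Matrix.smul_mul, vecMulVec_mul, hstarφ]
  have hvv : Matrix.vecMulVec φ (star φ) * Matrix.vecMulVec φ (star φ)
      = r • Matrix.vecMulVec φ (star φ) := by
    ext i j
    simp only [Matrix.mul_apply, Matrix.vecMulVec_apply, Matrix.smul_apply, smul_eq_mul,
      hr, dotProduct, Finset.sum_mul, Pi.star_apply]
    exact Finset.sum_congr rfl fun k _ => by ring
  have hPP : P * P = P := by
    rw [hP, Matrix.smul_mul, Matrix.mul_smul, hvv, smul_smul, smul_smul]
    congr 1
    field_simp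
  have hPh : Pᴴ = P := by
    rw [hP, hr_re]
    ext i j
    simp only [Matrix.conjTranspose_apply, Matrix.smul_apply, Matrix.vecMulVec_apply,
      Pi.star_apply, smul_eq_mul, star_mul', RCLike.star_def, _root_.map_mul, map_inv₀,
      Complex.conj_ofReal, Complex.conj_conj]
    ring
  have hpsd : (F - P).PosSemidef := by
    have h := (psd_of_proj hh hp).conjTranspose_mul_mul_same (1 - P)
    have he : (1 - P)ᴴ * F * (1 - P) = F - P := by
      rw [Matrix.conjTranspose_sub, Matrix.conjTranspose_one, hPh]
      calc (1 - P) * F * (1 - P) = (F - P * F) * (1 - P) := by rw [Matrix.sub_mul, one_mul]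
      _ = (F - P) * (1 - P) := by rw [hPF]
      _ = F - P - (P - P) := by
          rw [Matrix.sub_mul, Matrix.mul_sub, Matrix.mul_sub, mul_one, mul_one, hFP, hPP]
      _ = F - P := by simp
    rw [← he]; exact h
  have hPtr : P.trace = 1 := by
    rw [hP, Matrix.trace_smul]
    have : (Matrix.vecMulVec φ (star φ)).trace = r := by
      rw [hr]
      simp [Matrix.trace, Matrix.diag, Matrix.vecMulVec_apply, dotProduct, mul_comm]
    rw [this, smul_eq_mul, inv_mul_cancel₀ hrne]
  have := psd_trace_re_nonneg hpsd
  rw [Matrix.trace_sub, Complex.sub_re, hPtr] at this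
  simpa using le_of_sub_nonneg this

/-- at most `m` of the projectors are nonzero -/
lemma card_nonzero_le {m : ℕ} {α : Type*} [Fintype α] [DecidableEq α]
    {F : α → Matrix (Fin m) (Fin m) ℂ}
    (hh : ∀ a, (F a).IsHermitian) (hp : ∀ a, F a * F a = F a) (hs : ∑ a, F a = 1) :
    (Finset.univ.filter (fun a => F a ≠ 0)).card ≤ m := by
  classical
  have h1 : ((Finset.univ.filter (fun a => F a ≠ 0)).card : ℝ)
      ≤ ∑ a ∈ Finset.univ.filter (fun a => F a ≠ 0), ((F a).trace).re := by
    rw [Finset.card_eq_sum_ones]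
    push_cast
    exact Finset.sum_le_sum fun a ha => trace_re_ge_one_of_proj_ne_zero (hh a) (hp a)
      (Finset.mem_filter.mp ha).2
  have h2 : ∑ a ∈ Finset.univ.filter (fun a => F a ≠ 0), ((F a).trace).re
      ≤ ∑ a, ((F a).trace).re := by
    refine Finset.sum_le_sum_of_subset_of_nonneg (Finset.filter_subset _ _) fun a _ _ =>
      psd_trace_re_nonneg (psd_of_proj (hh a) (hp a))
  have h3 : ∑ a, ((F a).trace).re = (m : ℝ) := by
    have : (∑ a, (F a).trace) = ((1 : Matrix (Fin m) (Fin m) ℂ)).trace := by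
      rw [← Matrix.trace_sum, hs]
    rw [← Complex.re_sum, this, Matrix.trace_one]
    simp
  have := (h1.trans h2).trans_eq h3
  exact_mod_cast this

end Stmt8Aux

namespace Stmt8Aux

variable {ι κ : Type*} [Fintype ι] [Fintype κ] [DecidableEq ι] [DecidableEq κ]

lemma normsq_toE' (v : ι → ℂ) : (‖toE v‖ : ℝ)^2 = ∑ i, ‖v i‖^2 := by
  rw [EuclideanSpace.norm_eq]
  rw [Real.sq_sqrt (Finset.sum_nonneg fun i _ => sq_nonneg _)]
  rfl

lemma kron_conjTranspose {l p : Type*} (A : Matrix ι l ℂ) (B : Matrix κ p ℂ) :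
    (A ⊗ₖ B)ᴴ = Aᴴ ⊗ₖ Bᴴ := by
  ext ⟨i, j⟩ ⟨k, l⟩
  simp [Matrix.conjTranspose_apply, Matrix.kroneckerMap_apply]

lemma sum_kron {α : Type*} (s : Finset α) (F : α → Matrix ι ι ℂ) (B : Matrix κ κ ℂ) :
    (∑ a ∈ s, F a) ⊗ₖ B = ∑ a ∈ s, (F a ⊗ₖ B) := by
  ext ⟨i, j⟩ ⟨k, l⟩
  simp [Matrix.kroneckerMap_apply, Matrix.sum_apply, Finset.sum_mul]

lemma one_kron_mulVec (C : Matrix κ κ ℂ) (x : ι × κ → ℂ) (a : ι) (i : κ) :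
    (((1 : Matrix ι ι ℂ) ⊗ₖ C) *ᵥ x) (a, i) = (C *ᵥ fun j => x (a, j)) i := by
  rw [Matrix.mulVec, dotProduct, Fintype.sum_prod_type]
  rw [Finset.sum_eq_single_of_mem a (Finset.mem_univ a)]
  · simp [Matrix.mulVec, dotProduct, Matrix.kroneckerMap_apply]
  · intro b _ hb
    simp [Matrix.kroneckerMap_apply, Matrix.one_apply, Ne.symm hb]

lemma norm_one_kron_mulVec_le {ε : ℝ} {C : Matrix κ κ ℂ}
    (hC : ∀ ψ : κ → ℂ, (‖toE (C *ᵥ ψ)‖ : ℝ)^2 ≤ ε * ‖toE ψ‖^2) (x : ι × κ → ℂ) :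
    (‖toE (((1 : Matrix ι ι ℂ) ⊗ₖ C) *ᵥ x)‖ : ℝ)^2 ≤ ε * ‖toE x‖^2 := by
  rw [normsq_toE', normsq_toE']
  rw [Fintype.sum_prod_type, Fintype.sum_prod_type]
  rw [Finset.mul_sum]
  refine Finset.sum_le_sum fun a _ => ?_
  have h := hC (fun j => x (a, j))
  rw [normsq_toE', normsq_toE'] at h
  calc ∑ i, ‖(((1 : Matrix ι ι ℂ) ⊗ₖ C) *ᵥ x) (a, i)‖^2
      = ∑ i, ‖(C *ᵥ fun j => x (a, j)) i‖^2 := by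
        exact Finset.sum_congr rfl fun i _ => by rw [one_kron_mulVec]
  _ ≤ ε * ∑ j, ‖x (a, j)‖^2 := h

end Stmt8Aux

namespace Stmt8Aux

variable {κ : Type*} [Fintype κ] [DecidableEq κ]

lemma trace_vecMulVec (u v : κ → ℂ) : (Matrix.vecMulVec u v).trace = v ⬝ᵥ u := by
  simp [Matrix.trace, Matrix.diag, Matrix.vecMulVec_apply, dotProduct, mul_comm]

lemma dot_star_self (w : κ → ℂ) : star w ⬝ᵥ w = ((‖toE w‖^2 : ℝ) : ℂ) := by
  rw [normsq_toE']
  push_cast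
  refine Finset.sum_congr rfl fun i _ => ?_
  rw [Pi.star_apply, RCLike.star_def, mul_comm, Complex.mul_conj]
  norm_cast
  exact (Complex.sq_norm _).symm

lemma Vbound {ε : ℝ} (hε : 0 ≤ ε) {P Q : Matrix κ κ ℂ}
    (hPh : P.IsHermitian) (hPp : P * P = P) (hQh : Q.IsHermitian) (hQp : Q * Q = Q)
    (hNA : ∀ σ : Matrix κ κ ℂ, σ.PosSemidef → σ.trace = 1 →
      (P * σ).trace.re + (Q * σ).trace.re ≤ 1 + ε)
    (ψ : κ → ℂ) : (‖toE ((P * Q) *ᵥ ψ)‖ : ℝ)^2 ≤ ε * ‖toE ψ‖^2 := by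
  classical
  set φ : κ → ℂ := Q *ᵥ ψ with hφ
  have hPQ : (P * Q) *ᵥ ψ = P *ᵥ φ := by rw [hφ, Matrix.mulVec_mulVec]
  by_cases hzero : φ = 0
  · rw [hPQ, hzero]
    simp only [Matrix.mulVec_zero]
    have : toE (0 : κ → ℂ) = 0 := rfl
    rw [this, norm_zero]
    simpa using mul_nonneg hε (sq_nonneg ‖toE ψ‖)
  -- setup the state σ
  set R : ℝ := ∑ i, Complex.normSq (φ i) with hR
  have hRnn : ∀ i, (0:ℝ) ≤ Complex.normSq (φ i) := fun i => Complex.normSq_nonneg _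
  have hRpos : 0 < R := by
    obtain ⟨i0, hi0⟩ : ∃ i, φ i ≠ 0 := by
      by_contra h; push_neg at h; exact hzero (funext h)
    have h1 : 0 < Complex.normSq (φ i0) :=
      lt_of_le_of_ne (hRnn i0) (Ne.symm fun h => hi0 (Complex.normSq_eq_zero.mp h))
    exact lt_of_lt_of_le h1 (Finset.single_le_sum (fun i _ => hRnn i) (Finset.mem_univ i0))
  have hr_eq : star φ ⬝ᵥ φ = (R : ℂ) := by
    rw [hR]; push_cast
    simp [dotProduct, Complex.normSq_eq_conj_mul_self]
  have hRne : (R : ℂ) ≠ 0 := by exact_mod_cast ne_of_gt hRpos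
  set σ : Matrix κ κ ℂ := (R : ℂ)⁻¹ • Matrix.vecMulVec φ (star φ) with hσ
  have hσh : σ.IsHermitian := by
    rw [Matrix.IsHermitian, hσ]
    ext i j
    simp only [Matrix.conjTranspose_apply, Matrix.smul_apply, Matrix.vecMulVec_apply,
      Pi.star_apply, smul_eq_mul, star_mul', RCLike.star_def, map_inv₀,
      Complex.conj_ofReal, Complex.conj_conj]
    ring
  have hσpsd : σ.PosSemidef := by
    refine Matrix.PosSemidef.of_dotProduct_mulVec_nonneg hσh fun x => ?_
    have h1 : σ *ᵥ x = ((R:ℂ)⁻¹ * (star φ ⬝ᵥ x)) • φ := by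
      rw [hσ]
      ext i
      simp [Matrix.mulVec, dotProduct, Matrix.smul_apply, Matrix.vecMulVec_apply,
        Finset.mul_sum, Finset.sum_mul]
      exact Finset.sum_congr rfl fun k _ => by ring
    rw [h1, dotProduct_smul]
    have h2 : star x ⬝ᵥ φ = star (star φ ⬝ᵥ x) := by
      simp [dotProduct, mul_comm]
    rw [smul_eq_mul, h2]
    set z : ℂ := star φ ⬝ᵥ x
    have h3 : (R:ℂ)⁻¹ * z * star z = ((R⁻¹ * Complex.normSq z : ℝ) : ℂ) := by
      rw [mul_assoc, RCLike.star_def, Complex.mul_conj]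
      push_cast
      ring
    rw [h3]
    rw [Complex.zero_le_real]
    exact mul_nonneg (inv_nonneg.mpr hRpos.le) (Complex.normSq_nonneg z)
  have hσtr : σ.trace = 1 := by
    rw [hσ, Matrix.trace_smul, trace_vecMulVec, hr_eq, smul_eq_mul,
      inv_mul_cancel₀ hRne]
  have hQσ : (Q * σ).trace = 1 := by
    rw [hσ, Matrix.mul_smul, Matrix.trace_smul, mul_vecMulVec]
    have hQφ : Q *ᵥ φ = φ := by rw [hφ, Matrix.mulVec_mulVec, hQp]
    rw [hQφ, trace_vecMulVec, hr_eq, smul_eq_mul, inv_mul_cancel₀ hRne]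
  have hPφ2 : P *ᵥ (P *ᵥ φ) = P *ᵥ φ := by rw [Matrix.mulVec_mulVec, hPp]
  have h4 : star (P *ᵥ φ) ⬝ᵥ (P *ᵥ φ) = star φ ⬝ᵥ (P *ᵥ φ) := by
    rw [Matrix.star_mulVec, ← Matrix.dotProduct_mulVec, hPh.eq, hPφ2]
  have hPσ : ((P * σ).trace).re = R⁻¹ * ‖toE (P *ᵥ φ)‖^2 := by
    rw [hσ, Matrix.mul_smul, Matrix.trace_smul, mul_vecMulVec, trace_vecMulVec, ← h4,
      dot_star_self, smul_eq_mul, ← Complex.ofReal_inv, ← Complex.ofReal_mul,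
      Complex.ofReal_re]
  have hb := hNA σ hσpsd hσtr
  rw [hPσ, hQσ, Complex.one_re] at hb
  have hφR : (‖toE φ‖:ℝ)^2 = R := by
    rw [normsq_toE', hR]
    exact Finset.sum_congr rfl fun i _ => by
      rw [Complex.sq_norm]
  have hkey : (‖toE (P *ᵥ φ)‖:ℝ)^2 ≤ ε * R := by
    have h6 : R⁻¹ * ‖toE (P *ᵥ φ)‖^2 ≤ ε := by linarith
    calc (‖toE (P *ᵥ φ)‖:ℝ)^2 = R * (R⁻¹ * ‖toE (P *ᵥ φ)‖^2) := by
          field_simp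
    _ ≤ R * ε := by exact mul_le_mul_of_nonneg_left h6 hRpos.le
    _ = ε * R := mul_comm _ _
  have hφψ : ‖toE φ‖ ≤ ‖toE ψ‖ := by
    by_cases hz : ‖toE φ‖ = 0
    · rw [hz]; exact norm_nonneg _
    · have hinner := norm_toE_mulVec_idem hQh hQp ψ
      have hre : RCLike.re ⟪toE ψ, toE (Q *ᵥ ψ)⟫_ℂ = ‖toE (Q *ᵥ ψ)‖^2 := by
        rw [hinner]
        norm_cast
      have hcs := re_inner_le_norm (𝕜 := ℂ) (toE ψ) (toE (Q *ᵥ ψ))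
      rw [hre] at hcs
      have hφn : (0:ℝ) < ‖toE φ‖ := lt_of_le_of_ne (norm_nonneg _) (Ne.symm hz)
      have : ‖toE φ‖^2 ≤ ‖toE ψ‖ * ‖toE φ‖ := by
        calc ‖toE φ‖^2 = ‖toE (Q *ᵥ ψ)‖^2 := by rw [hφ]
        _ ≤ ‖toE ψ‖ * ‖toE (Q *ᵥ ψ)‖ := hcs
        _ = ‖toE ψ‖ * ‖toE φ‖ := by rw [hφ]
      nlinarith
  calc (‖toE ((P * Q) *ᵥ ψ)‖:ℝ)^2 = ‖toE (P *ᵥ φ)‖^2 := by rw [hPQ]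
  _ ≤ ε * R := hkey
  _ = ε * ‖toE φ‖^2 := by rw [hφR]
  _ ≤ ε * ‖toE ψ‖^2 := by
      have := mul_le_mul_of_nonneg_left (pow_le_pow_left₀ (norm_nonneg _) hφψ 2) hε
      simpa using this

end Stmt8Aux

namespace Stmt8Aux

variable {ι κ : Type*} [Fintype ι] [Fintype κ] [DecidableEq ι] [DecidableEq κ]

lemma sum_mulVec {α : Type*} (s : Finset α) (M : α → Matrix ι κ ℂ) (v : κ → ℂ) :
    (∑ a ∈ s, M a) *ᵥ v = ∑ a ∈ s, (M a) *ᵥ v := by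
  ext i
  simp only [Matrix.mulVec, dotProduct, Matrix.sum_apply, Finset.sum_apply, Finset.sum_mul]
  exact Finset.sum_comm

/-- for Hermitian idempotents summing to 1, the squared norms of the images partition -/
lemma partition_normsq {α : Type*} [Fintype α] {G : α → Matrix ι ι ℂ}
    (hh : ∀ a, (G a).IsHermitian) (hp : ∀ a, G a * G a = G a) (hs : ∑ a, G a = 1)
    (v : ι → ℂ) : ∑ a, (‖toE ((G a) *ᵥ v)‖:ℝ)^2 = ‖toE v‖^2 := by
  have key : ∑ a, ⟪toE v, toE ((G a) *ᵥ v)⟫_ℂ = ⟪toE v, toE v⟫_ℂ := by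
    rw [← inner_sum, ← toE_sum, ← sum_mulVec, hs, Matrix.one_mulVec]
  have h1 : ∀ a, RCLike.re ⟪toE v, toE ((G a) *ᵥ v)⟫_ℂ = (‖toE ((G a) *ᵥ v)‖:ℝ)^2 := by
    intro a
    rw [norm_toE_mulVec_idem (hh a) (hp a)]
    norm_cast
  calc ∑ a, (‖toE ((G a) *ᵥ v)‖:ℝ)^2
      = ∑ a, RCLike.re ⟪toE v, toE ((G a) *ᵥ v)⟫_ℂ := by
        exact (Finset.sum_congr rfl fun a _ => h1 a).symm
  _ = RCLike.re ⟪toE v, toE v⟫_ℂ := by rw [← map_sum, key]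
  _ = ‖toE v‖^2 := @inner_self_eq_norm_sq ℂ _ _ _ _ (toE v)

end Stmt8Aux

namespace Stmt8Aux

/-- The core estimate: the operator `M0 * M1` shrinks squared norms by `m * ε`. -/
lemma core {m nb : ℕ} {Y0 Y1 : Type} [Fintype Y0] [Fintype Y1]
    {F0 : Y0 → Matrix (Fin m) (Fin m) ℂ} {V0 : Y0 → Matrix (Fin nb) (Fin nb) ℂ}
    {F1 : Y1 → Matrix (Fin m) (Fin m) ℂ} {V1 : Y1 → Matrix (Fin nb) (Fin nb) ℂ}
    (hF0h : ∀ y, (F0 y).IsHermitian) (hF0p : ∀ y, F0 y * F0 y = F0 y) (hF0s : ∑ y, F0 y = 1)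
    (hF1h : ∀ y, (F1 y).IsHermitian) (hF1p : ∀ y, F1 y * F1 y = F1 y) (hF1s : ∑ y, F1 y = 1)
    {ε : ℝ} (hε : 0 ≤ ε)
    (hVb : ∀ y0 y1 (ψ : Fin nb → ℂ),
      (‖toE ((V0 y0 * V1 y1) *ᵥ ψ)‖:ℝ)^2 ≤ ε * ‖toE ψ‖^2)
    (x : Fin m × Fin nb → ℂ) :
    (‖toE (((∑ y, F0 y ⊗ₖ V0 y) * (∑ y, F1 y ⊗ₖ V1 y)) *ᵥ x)‖:ℝ)^2
      ≤ (m * ε) * ‖toE x‖^2 := by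
  classical
  set g : Y0 → Y1 → (Fin m × Fin nb → ℂ) :=
    fun y0 y1 => ((F0 y0 * F1 y1) ⊗ₖ (V0 y0 * V1 y1)) *ᵥ x with hg
  set h : Y0 → Y1 → (Fin m × Fin nb → ℂ) :=
    fun y0 y1 => ((F0 y0 * F1 y1) ⊗ₖ (1 : Matrix (Fin nb) (Fin nb) ℂ)) *ᵥ x with hh
  have hz : ((∑ y, F0 y ⊗ₖ V0 y) * (∑ y, F1 y ⊗ₖ V1 y)) *ᵥ x
      = ∑ y0, ∑ y1, g y0 y1 := by
    rw [Finset.sum_mul_sum]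
    rw [sum_mulVec]
    refine Finset.sum_congr rfl fun y0 _ => ?_
    rw [sum_mulVec]
    refine Finset.sum_congr rfl fun y1 _ => ?_
    rw [← Matrix.mul_kronecker_mul]
  -- orthogonality across y0
  have horth : ∀ a b : Y0, a ≠ b →
      ⟪toE (∑ y1, g a y1), toE (∑ y1, g b y1)⟫_ℂ = 0 := by
    intro a b hab
    rw [toE_sum, toE_sum, sum_inner]
    refine Finset.sum_eq_zero fun y1 _ => ?_
    rw [inner_sum]
    refine Finset.sum_eq_zero fun y1' _ => ?_
    rw [hg]
    rw [inner_mulVec_left]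
    rw [Matrix.mulVec_mulVec]
    rw [kron_conjTranspose, ← Matrix.mul_kronecker_mul]
    have hzero : (F0 a * F1 y1)ᴴ * (F0 b * F1 y1') = 0 := by
      rw [conjTranspose_mul, (hF0h a).eq, (hF1h y1).eq]
      calc F1 y1 * F0 a * (F0 b * F1 y1')
          = F1 y1 * (F0 a * F0 b) * F1 y1' := by
            rw [mul_assoc, mul_assoc, mul_assoc]
      _ = 0 := by rw [proj_orth hF0h hF0p hF0s hab, mul_zero, zero_mul]
    rw [hzero, Matrix.zero_kronecker, Matrix.zero_mulVec]
    rw [inner_toE]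
    simp
  have hsplit : (‖toE (((∑ y, F0 y ⊗ₖ V0 y) * (∑ y, F1 y ⊗ₖ V1 y)) *ᵥ x)‖:ℝ)^2
      = ∑ y0, (‖toE (∑ y1, g y0 y1)‖:ℝ)^2 := by
    rw [hz]
    exact normsq_sum_of_orth (fun y0 => ∑ y1, g y0 y1) horth
  -- the set of nonzero F1 projectors
  set S : Finset Y1 := Finset.univ.filter (fun y => F1 y ≠ 0) with hS
  have hScard : (S.card : ℝ) ≤ (m : ℝ) := by
    exact_mod_cast card_nonzero_le hF1h hF1p hF1s
  -- bound for each y0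
  have hy0 : ∀ y0, (‖toE (∑ y1, g y0 y1)‖:ℝ)^2 ≤ (m : ℝ) * ε * ∑ y1, ‖toE (h y0 y1)‖^2 := by
    intro y0
    have hgS : ∑ y1, g y0 y1 = ∑ y1 ∈ S, g y0 y1 := by
      refine (Finset.sum_subset (Finset.subset_univ S) ?_).symm
      intro y1 _ hy1
      have : F1 y1 = 0 := by
        by_contra hne
        exact hy1 (Finset.mem_filter.mpr ⟨Finset.mem_univ _, hne⟩)
      rw [hg]
      simp only [this, mul_zero, Matrix.zero_kronecker, Matrix.zero_mulVec]
    have htri : ‖toE (∑ y1 ∈ S, g y0 y1)‖ ≤ ∑ y1 ∈ S, ‖toE (g y0 y1)‖ := by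
      rw [toE_sum]
      exact norm_sum_le S fun y1 => toE (g y0 y1)
    have hterm : ∀ y1, ‖toE (g y0 y1)‖ ≤ Real.sqrt ε * ‖toE (h y0 y1)‖ := by
      intro y1
      have hfac : g y0 y1 = ((1 : Matrix (Fin m) (Fin m) ℂ) ⊗ₖ (V0 y0 * V1 y1)) *ᵥ (h y0 y1) := by
        rw [hg, hh, Matrix.mulVec_mulVec, ← Matrix.mul_kronecker_mul, one_mul, mul_one]
      have hb := norm_one_kron_mulVec_le (C := V0 y0 * V1 y1)
        (fun ψ => hVb y0 y1 ψ) (h y0 y1)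
      rw [← hfac] at hb
      have h1 : ‖toE (g y0 y1)‖ ≤ Real.sqrt (ε * ‖toE (h y0 y1)‖^2) := by
        rw [Real.le_sqrt (norm_nonneg _) (by positivity)]
        exact hb
      rwa [Real.sqrt_mul hε, Real.sqrt_sq (norm_nonneg _)] at h1
    calc (‖toE (∑ y1, g y0 y1)‖:ℝ)^2 = ‖toE (∑ y1 ∈ S, g y0 y1)‖^2 := by rw [hgS]
    _ ≤ (∑ y1 ∈ S, ‖toE (g y0 y1)‖)^2 := by
        exact pow_le_pow_left₀ (norm_nonneg _) htri 2
    _ ≤ (∑ y1 ∈ S, Real.sqrt ε * ‖toE (h y0 y1)‖)^2 := by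
        refine pow_le_pow_left₀ (Finset.sum_nonneg fun _ _ => norm_nonneg _) ?_ 2
        exact Finset.sum_le_sum fun y1 _ => hterm y1
    _ = ε * (∑ y1 ∈ S, ‖toE (h y0 y1)‖)^2 := by
        rw [← Finset.mul_sum, mul_pow, Real.sq_sqrt hε]
    _ ≤ ε * ((S.card : ℝ) * ∑ y1 ∈ S, ‖toE (h y0 y1)‖^2) := by
        refine mul_le_mul_of_nonneg_left ?_ hε
        exact_mod_cast sq_sum_le_card_mul_sum_sq (s := S) (f := fun y1 => ‖toE (h y0 y1)‖)
    _ ≤ ε * ((m:ℝ) * ∑ y1, ‖toE (h y0 y1)‖^2) := by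
        refine mul_le_mul_of_nonneg_left ?_ hε
        refine mul_le_mul hScard ?_ (Finset.sum_nonneg fun _ _ => sq_nonneg _) (Nat.cast_nonneg m)
        exact Finset.sum_le_sum_of_subset_of_nonneg (Finset.subset_univ S)
          fun _ _ _ => sq_nonneg _
    _ = (m:ℝ) * ε * ∑ y1, ‖toE (h y0 y1)‖^2 := by ring
  -- sum everything
  have hpart : ∑ y0, ∑ y1, (‖toE (h y0 y1)‖:ℝ)^2 = ‖toE x‖^2 := by
    rw [Finset.sum_comm]
    have hG0h : ∀ y0, ((F0 y0) ⊗ₖ (1 : Matrix (Fin nb) (Fin nb) ℂ)).IsHermitian := by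
      intro y0
      rw [Matrix.IsHermitian, kron_conjTranspose, Matrix.conjTranspose_one, (hF0h y0).eq]
    have hG0p : ∀ y0, ((F0 y0) ⊗ₖ (1 : Matrix (Fin nb) (Fin nb) ℂ))
        * ((F0 y0) ⊗ₖ 1) = (F0 y0) ⊗ₖ 1 := by
      intro y0
      rw [← Matrix.mul_kronecker_mul, hF0p y0, one_mul]
    have hG0s : ∑ y0, (F0 y0) ⊗ₖ (1 : Matrix (Fin nb) (Fin nb) ℂ) = 1 := by
      rw [← sum_kron, hF0s, Matrix.one_kronecker_one]
    have hG1h : ∀ y1, ((F1 y1) ⊗ₖ (1 : Matrix (Fin nb) (Fin nb) ℂ)).IsHermitian := by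
      intro y1
      rw [Matrix.IsHermitian, kron_conjTranspose, Matrix.conjTranspose_one, (hF1h y1).eq]
    have hG1p : ∀ y1, ((F1 y1) ⊗ₖ (1 : Matrix (Fin nb) (Fin nb) ℂ))
        * ((F1 y1) ⊗ₖ 1) = (F1 y1) ⊗ₖ 1 := by
      intro y1
      rw [← Matrix.mul_kronecker_mul, hF1p y1, one_mul]
    have hG1s : ∑ y1, (F1 y1) ⊗ₖ (1 : Matrix (Fin nb) (Fin nb) ℂ) = 1 := by
      rw [← sum_kron, hF1s, Matrix.one_kronecker_one]
    calc ∑ y1, ∑ y0, (‖toE (h y0 y1)‖:ℝ)^2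
        = ∑ y1, ‖toE (((F1 y1) ⊗ₖ (1 : Matrix (Fin nb) (Fin nb) ℂ)) *ᵥ x)‖^2 := by
          refine Finset.sum_congr rfl fun y1 _ => ?_
          have : ∀ y0, h y0 y1 = ((F0 y0) ⊗ₖ (1 : Matrix (Fin nb) (Fin nb) ℂ))
              *ᵥ (((F1 y1) ⊗ₖ (1 : Matrix (Fin nb) (Fin nb) ℂ)) *ᵥ x) := by
            intro y0
            rw [hh, Matrix.mulVec_mulVec, ← Matrix.mul_kronecker_mul, one_mul]
          rw [Finset.sum_congr rfl fun y0 _ => by rw [this y0]]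
          exact partition_normsq hG0h hG0p hG0s _
    _ = ‖toE x‖^2 := partition_normsq hG1h hG1p hG1s x
  calc (‖toE (((∑ y, F0 y ⊗ₖ V0 y) * (∑ y, F1 y ⊗ₖ V1 y)) *ᵥ x)‖:ℝ)^2
      = ∑ y0, (‖toE (∑ y1, g y0 y1)‖:ℝ)^2 := hsplit
  _ ≤ ∑ y0, (m : ℝ) * ε * ∑ y1, ‖toE (h y0 y1)‖^2 := Finset.sum_le_sum fun y0 _ => hy0 y0
  _ = (m : ℝ) * ε * ∑ y0, ∑ y1, ‖toE (h y0 y1)‖^2 := by rw [← Finset.mul_sum]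
  _ = (m * ε) * ‖toE x‖^2 := by rw [hpart]

end Stmt8Aux

namespace Stmt8Aux

variable {n : Type*} [Fintype n] [DecidableEq n]

lemma psd_diag_re_nonneg {M : Matrix n n ℂ} (hM : M.PosSemidef) (i : n) :
    0 ≤ (M i i).re := by
  have := hM.re_dotProduct_nonneg (Pi.single i 1)
  simpa [dotProduct, Matrix.mulVec, Pi.single_apply] using this

lemma M_idem {Y : Type*} [Fintype Y] {κ : Type*} [Fintype κ] [DecidableEq κ]
    {F : Y → Matrix n n ℂ} {V : Y → Matrix κ κ ℂ}
    (hFh : ∀ y, (F y).IsHermitian) (hFp : ∀ y, F y * F y = F y) (hFs : ∑ y, F y = 1)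
    (hVp : ∀ y, V y * V y = V y) :
    (∑ y, F y ⊗ₖ V y) * (∑ y, F y ⊗ₖ V y) = ∑ y, F y ⊗ₖ V y := by
  classical
  rw [Finset.sum_mul_sum]
  refine Finset.sum_congr rfl fun y _ => ?_
  rw [Finset.sum_eq_single_of_mem y (Finset.mem_univ y)]
  · rw [← Matrix.mul_kronecker_mul, hFp y, hVp y]
  · intro y' _ hy'
    rw [← Matrix.mul_kronecker_mul, proj_orth hFh hFp hFs (Ne.symm hy'), Matrix.zero_kronecker]

lemma M_herm {Y : Type*} [Fintype Y] {κ : Type*} [Fintype κ] [DecidableEq κ]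
    {F : Y → Matrix n n ℂ} {V : Y → Matrix κ κ ℂ}
    (hFh : ∀ y, (F y).IsHermitian) (hVh : ∀ y, (V y).IsHermitian) :
    (∑ y, F y ⊗ₖ V y).IsHermitian := by
  rw [Matrix.IsHermitian, Matrix.conjTranspose_sum]
  refine Finset.sum_congr rfl fun y _ => ?_
  rw [kron_conjTranspose, (hFh y).eq, (hVh y).eq]

/-- existence of a top eigenvector dominating the trace against a state -/
lemma exists_eigen [Nonempty n] {M ρ : Matrix n n ℂ} (hM : M.IsHermitian)
    (hρ : ρ.PosSemidef) (htr : ρ.trace = 1) :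
    ∃ (s : ℝ) (v : n → ℂ), v ≠ 0 ∧ M *ᵥ v = (s : ℂ) • v ∧ ((M * ρ).trace).re ≤ s := by
  classical
  set U : Matrix n n ℂ := (Matrix.IsHermitian.eigenvectorUnitary hM : Matrix n n ℂ) with hU
  set D : Matrix n n ℂ :=
    Matrix.diagonal (RCLike.ofReal ∘ hM.eigenvalues) with hD
  have hUU : U * star U = 1 := (Matrix.mem_unitaryGroup_iff).mp
    (Matrix.IsHermitian.eigenvectorUnitary hM).2
  have hUU' : star U * U = 1 := (Matrix.mem_unitaryGroup_iff').mp
    (Matrix.IsHermitian.eigenvectorUnitary hM).2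
  set τ : Matrix n n ℂ := star U * ρ * U with hτ
  have hτpsd : τ.PosSemidef := by
    rw [hτ, Matrix.star_eq_conjTranspose]
    exact hρ.conjTranspose_mul_mul_same U
  have hτtr : τ.trace = 1 := by
    rw [hτ, Matrix.trace_mul_cycle, hUU, Matrix.one_mul, htr]
  have htrace : (M * ρ).trace = (D * τ).trace := by
    have h1 : M * ρ = U * (D * star U * ρ) := by
      rw [hM.spectral_theorem, Unitary.conjStarAlgAut_apply, ← hU, ← hD]
      simp only [Matrix.mul_assoc]
    rw [h1, Matrix.trace_mul_comm, hτ]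
    simp only [Matrix.mul_assoc]
  have hdiag : (D * τ).trace = ∑ i, (hM.eigenvalues i : ℂ) * τ i i := by
    rw [Matrix.trace]
    refine Finset.sum_congr rfl fun i _ => ?_
    rw [Matrix.diag_apply, hD, Matrix.diagonal_mul]
    rfl
  -- pick the max eigenvalue
  obtain ⟨i0, _, hmax⟩ := Finset.exists_max_image Finset.univ hM.eigenvalues
    ⟨Classical.arbitrary n, Finset.mem_univ _⟩
  refine ⟨hM.eigenvalues i0, ⇑(hM.eigenvectorBasis i0), ?_, ?_, ?_⟩
  · intro h0
    have := (hM.eigenvectorBasis).orthonormal.ne_zero i0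
    apply this
    ext i
    exact congrFun h0 i
  · have := hM.mulVec_eigenvectorBasis i0
    rw [this]
    ext i
    simp [Pi.smul_apply, Complex.real_smul]
  · rw [htrace, hdiag, Complex.re_sum]
    have hterm : ∀ i, ((hM.eigenvalues i : ℂ) * τ i i).re
        = hM.eigenvalues i * (τ i i).re := by
      intro i
      simp [Complex.mul_re, Complex.ofReal_re, Complex.ofReal_im]
    rw [Finset.sum_congr rfl fun i _ => hterm i]
    have hbound : ∑ i, hM.eigenvalues i * (τ i i).re
        ≤ ∑ i, hM.eigenvalues i0 * (τ i i).re := by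
      refine Finset.sum_le_sum fun i _ => ?_
      exact mul_le_mul_of_nonneg_right (hmax i (Finset.mem_univ i)) (psd_diag_re_nonneg hτpsd i)
    have hsum1 : ∑ i, (τ i i).re = 1 := by
      have : (τ.trace).re = 1 := by rw [hτtr]; rfl
      rw [← this, Matrix.trace, Complex.re_sum]
      rfl
    calc ∑ i, hM.eigenvalues i * (τ i i).re ≤ ∑ i, hM.eigenvalues i0 * (τ i i).re := hbound
    _ = hM.eigenvalues i0 * ∑ i, (τ i i).re := by rw [← Finset.mul_sum]
    _ = hM.eigenvalues i0 := by rw [hsum1, mul_one]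

end Stmt8Aux


open Stmt8Aux in
/-- If a non-interactive bit-commitment scheme with projective verification `{V_y}` is
`ε`-binding against non-adaptive adversaries, then it is `2^{q/2}√ε`-binding against
adversaries holding a quantum register `A` of at most `q` qubits and using projective
opening measurements. -/
theorem stmt8 {nb q m : ℕ} {Y0 Y1 : Type} [Fintype Y0] [Fintype Y1]
    (V0 : Y0 → Matrix (Fin nb) (Fin nb) ℂ) (V1 : Y1 → Matrix (Fin nb) (Fin nb) ℂ)
    (hV0h : ∀ y, (V0 y).IsHermitian) (hV0p : ∀ y, V0 y * V0 y = V0 y)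
    (hV1h : ∀ y, (V1 y).IsHermitian) (hV1p : ∀ y, V1 y * V1 y = V1 y)
    (ε : ℝ) (hε : 0 ≤ ε)
    (hNA : ∀ σ : Matrix (Fin nb) (Fin nb) ℂ, σ.PosSemidef → σ.trace = 1 →
      ∀ y0 y1, (V0 y0 * σ).trace.re + (V1 y1 * σ).trace.re ≤ 1 + ε)
    (hm : m ≤ 2 ^ q)
    (ρ : Matrix (Fin m × Fin nb) (Fin m × Fin nb) ℂ) (hρ : ρ.PosSemidef) (htr : ρ.trace = 1)
    (F0 : Y0 → Matrix (Fin m) (Fin m) ℂ) (F1 : Y1 → Matrix (Fin m) (Fin m) ℂ)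
    (hF0h : ∀ y, (F0 y).IsHermitian) (hF0p : ∀ y, F0 y * F0 y = F0 y) (hF0s : ∑ y, F0 y = 1)
    (hF1h : ∀ y, (F1 y).IsHermitian) (hF1p : ∀ y, F1 y * F1 y = F1 y) (hF1s : ∑ y, F1 y = 1) :
    ∑ y, ((F0 y ⊗ₖ V0 y) * ρ).trace.re + ∑ y, ((F1 y ⊗ₖ V1 y) * ρ).trace.re
      ≤ 1 + (2 : ℝ) ^ ((q : ℝ) / 2) * Real.sqrt ε := by
  classical
  -- the index type is nonempty, else the trace could not be 1
  rcases isEmpty_or_nonempty (Fin m × Fin nb) with hE | hE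
  · exfalso
    rw [Matrix.trace] at htr
    rw [Finset.univ_eq_empty, Finset.sum_empty] at htr
    exact zero_ne_one htr
  set M0 : Matrix (Fin m × Fin nb) (Fin m × Fin nb) ℂ := ∑ y, F0 y ⊗ₖ V0 y with hM0
  set M1 : Matrix (Fin m × Fin nb) (Fin m × Fin nb) ℂ := ∑ y, F1 y ⊗ₖ V1 y with hM1
  -- rewrite the LHS as a single trace
  have hLHS : ∑ y, ((F0 y ⊗ₖ V0 y) * ρ).trace.re + ∑ y, ((F1 y ⊗ₖ V1 y) * ρ).trace.re
      = (((M0 + M1) * ρ).trace).re := by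
    rw [Matrix.add_mul, Matrix.trace_add, Complex.add_re, hM0, hM1,
      Finset.sum_mul, Finset.sum_mul, Matrix.trace_sum, Matrix.trace_sum,
      Complex.re_sum, Complex.re_sum]
  -- positivity of the bound
  have hrpow : (0:ℝ) < (2 : ℝ) ^ ((q : ℝ) / 2) := Real.rpow_pos_of_pos two_pos _
  have hBnn : 0 ≤ (2 : ℝ) ^ ((q : ℝ) / 2) * Real.sqrt ε :=
    mul_nonneg hrpow.le (Real.sqrt_nonneg ε)
  -- Hermitian
  have hMh : (M0 + M1).IsHermitian :=
    (M_herm hF0h hV0h).add (M_herm hF1h hV1h)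
  obtain ⟨s, v, hv0, hvec, htrb⟩ := exists_eigen hMh hρ htr
  rw [hLHS]
  by_cases hs1 : s ≤ 1
  · calc (((M0 + M1) * ρ).trace).re ≤ s := htrb
    _ ≤ 1 := hs1
    _ ≤ 1 + (2 : ℝ) ^ ((q : ℝ) / 2) * Real.sqrt ε := le_add_of_nonneg_right hBnn
  push_neg at hs1
  -- the two half-norm bounds from the core lemma
  have hVb : ∀ y0 y1 (ψ : Fin nb → ℂ),
      (‖toE ((V0 y0 * V1 y1) *ᵥ ψ)‖:ℝ)^2 ≤ ε * ‖toE ψ‖^2 := fun y0 y1 ψ =>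
    Vbound hε (hV0h y0) (hV0p y0) (hV1h y1) (hV1p y1)
      (fun σ h1 h2 => hNA σ h1 h2 y0 y1) ψ
  have hVb' : ∀ y1 y0 (ψ : Fin nb → ℂ),
      (‖toE ((V1 y1 * V0 y0) *ᵥ ψ)‖:ℝ)^2 ≤ ε * ‖toE ψ‖^2 := fun y1 y0 ψ =>
    Vbound hε (hV1h y1) (hV1p y1) (hV0h y0) (hV0p y0)
      (fun σ h1 h2 => by linarith [hNA σ h1 h2 y0 y1]) ψ
  have hcore01 := core hF0h hF0p hF0s hF1h hF1p hF1s hε hVb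
  have hcore10 := core hF1h hF1p hF1s hF0h hF0p hF0s hε hVb'
  -- eigenvector components
  set u : Fin m × Fin nb → ℂ := M0 *ᵥ v with hu
  set w : Fin m × Fin nb → ℂ := M1 *ᵥ v with hw
  have huw : u + w = (s:ℂ) • v := by
    rw [hu, hw, ← Matrix.add_mulVec, hvec]
  have hM0p : M0 * M0 = M0 := M_idem hF0h hF0p hF0s hV0p
  have hM1p : M1 * M1 = M1 := M_idem hF1h hF1p hF1s hV1p
  have hM1w : M1 *ᵥ w = w := by rw [hw, Matrix.mulVec_mulVec, hM1p]
  have hM0u : M0 *ᵥ u = u := by rw [hu, Matrix.mulVec_mulVec, hM0p]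
  have hueq : u = (s:ℂ) • v - w := by rw [← huw]; abel
  have hweq : w = (s:ℂ) • v - u := by rw [← huw]; abel
  have hM1u : M1 *ᵥ u = ((s:ℂ) - 1) • w := by
    rw [hueq, Matrix.mulVec_sub, Matrix.mulVec_smul, ← hw, hM1w, sub_smul, one_smul]
  have hM0w : M0 *ᵥ w = ((s:ℂ) - 1) • u := by
    rw [hweq, Matrix.mulVec_sub, Matrix.mulVec_smul, ← hu, hM0u, sub_smul, one_smul]
  -- norms
  have hnorm_smul : ∀ z : Fin m × Fin nb → ℂ,
      ‖toE (((s:ℂ) - 1) • z)‖ = (s - 1) * ‖toE z‖ := by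
    intro z
    have : toE (((s:ℂ) - 1) • z) = ((s:ℂ) - 1) • toE z := rfl
    rw [this, norm_smul]
    congr 1
    have : ((s:ℂ) - 1) = ((s - 1 : ℝ) : ℂ) := by push_cast; ring
    rw [this, Complex.norm_real, Real.norm_eq_abs, abs_of_pos (by linarith)]
  set c : ℝ := Real.sqrt ((m : ℝ) * ε) with hc
  have hc2 : c^2 = (m:ℝ) * ε := Real.sq_sqrt (by positivity)
  have h01 : (s - 1) * ‖toE u‖ ≤ c * ‖toE w‖ := by
    have hb := hcore01 w
    have heq : (M0 * M1) *ᵥ w = ((s:ℂ) - 1) • u := by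
      rw [← Matrix.mulVec_mulVec, hM1w, hM0w]
    rw [heq, hnorm_smul] at hb
    have h1 : (s - 1) * ‖toE u‖ ≤ Real.sqrt ((m:ℝ) * ε * ‖toE w‖^2) := by
      rw [Real.le_sqrt (mul_nonneg (by linarith) (norm_nonneg _)) (by positivity)]
      exact hb
    rwa [Real.sqrt_mul (by positivity), Real.sqrt_sq (norm_nonneg _), ← hc] at h1
  have h10 : (s - 1) * ‖toE w‖ ≤ c * ‖toE u‖ := by
    have hb := hcore10 u
    have heq : (M1 * M0) *ᵥ u = ((s:ℂ) - 1) • w := by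
      rw [← Matrix.mulVec_mulVec, hM0u, hM1u]
    rw [heq, hnorm_smul] at hb
    have h1 : (s - 1) * ‖toE w‖ ≤ Real.sqrt ((m:ℝ) * ε * ‖toE u‖^2) := by
      rw [Real.le_sqrt (mul_nonneg (by linarith) (norm_nonneg _)) (by positivity)]
      exact hb
    rwa [Real.sqrt_mul (by positivity), Real.sqrt_sq (norm_nonneg _), ← hc] at h1
  have hpos : 0 < ‖toE u‖ + ‖toE w‖ := by
    rcases lt_or_ge 0 (‖toE u‖ + ‖toE w‖) with h | h
    · exact h
    exfalso
    have hu0 : ‖toE u‖ = 0 := le_antisymm (by linarith [norm_nonneg (toE w)]) (norm_nonneg _)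
    have hw0 : ‖toE w‖ = 0 := le_antisymm (by linarith [norm_nonneg (toE u)]) (norm_nonneg _)
    have hu0' : u = 0 := by
      have := norm_eq_zero.mp hu0
      ext i; exact congrArg (fun z : EuclideanSpace ℂ (Fin m × Fin nb) => z i) this
    have hw0' : w = 0 := by
      have := norm_eq_zero.mp hw0
      ext i; exact congrArg (fun z : EuclideanSpace ℂ (Fin m × Fin nb) => z i) this
    have : (s:ℂ) • v = 0 := by rw [← huw, hu0', hw0', add_zero]
    have hsne : (s:ℂ) ≠ 0 := by
      intro h'
      have : s = 0 := by exact_mod_cast h'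
      linarith
    exact hv0 (by simpa [hsne] using smul_eq_zero.mp this)
  have hs1c : s - 1 ≤ c := by
    have hadd : (s - 1) * (‖toE u‖ + ‖toE w‖) ≤ c * (‖toE u‖ + ‖toE w‖) := by
      calc (s - 1) * (‖toE u‖ + ‖toE w‖) = (s-1) * ‖toE u‖ + (s-1) * ‖toE w‖ := by ring
      _ ≤ c * ‖toE w‖ + c * ‖toE u‖ := add_le_add h01 h10
      _ = c * (‖toE u‖ + ‖toE w‖) := by ring
    exact le_of_mul_le_mul_right (by linarith [hadd]) hpos
  -- compare with the stated bound
  have hcB : c ≤ (2 : ℝ) ^ ((q : ℝ) / 2) * Real.sqrt ε := by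
    have h1 : c = Real.sqrt (m:ℝ) * Real.sqrt ε := by
      rw [hc, Real.sqrt_mul (Nat.cast_nonneg m)]
    have h2 : Real.sqrt (m:ℝ) ≤ Real.sqrt ((2:ℝ)^q) := by
      apply Real.sqrt_le_sqrt
      exact_mod_cast hm
    have h3 : Real.sqrt ((2:ℝ)^q) = (2 : ℝ) ^ ((q : ℝ) / 2) := by
      rw [Real.sqrt_eq_rpow, ← Real.rpow_natCast 2 q, ← Real.rpow_mul (by norm_num)]
      norm_num
      rw [mul_one_div]
    rw [h1]
    exact mul_le_mul_of_nonneg_right (h2.trans_eq h3) (Real.sqrt_nonneg ε)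
  calc (((M0 + M1) * ρ).trace).re ≤ s := htrb
  _ ≤ 1 + c := by linarith
  _ ≤ 1 + (2 : ℝ) ^ ((q : ℝ) / 2) * Real.sqrt ε := by linarith
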